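/- Let X be a Banach space, δ ∈ (0,2), and μ,θ ∈ [0,1] with μθ > 1-δ. For every x ∈ X, x* ∈ X* with ‖x‖ = μ, ‖x*‖ = θ and Re x*(x) ≥ 1-δ, one has d_∞((x,x*),Π(X)) ≤ Ψ(μ,θ,δ) when δ < min{1+μ², 1+θ²}, where Ψ(μ,θ,δ) = (2-μ-θ+√((μ-θ)²+8(μθ-1+δ)))/2. -/

import Mathlib

open Filter Topology


lemma exists_maximal_point {X : Type*} [NormedAddCommGroup X] [NormedSpace ℝ X]
    [CompleteSpace X] (C : Set X) (hC : IsClosed C) (g : X →L[ℝ] ℝ) (M : ℝ)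
    (hM : ∀ v ∈ C, g v ≤ M) (k : ℝ) (hk : 0 < k) (z : X) (hz : z ∈ C) :
    ∃ y ∈ C, k * ‖y - z‖ ≤ g y - g z ∧ ∀ v ∈ C, k * ‖v - y‖ ≤ g v - g y → v = y := by
  have key : ∀ (n : ℕ) (w : X), w ∈ C → ∃ v, (v ∈ C ∧ k * ‖v - w‖ ≤ g v - g w) ∧
      ∀ t ∈ C, k * ‖t - w‖ ≤ g t - g w → g t ≤ g v + (1/2)^n := by
    intro n w hw
    set T : Set ℝ := g '' {t | t ∈ C ∧ k * ‖t - w‖ ≤ g t - g w} with hT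
    have hTne : (g w) ∈ T := ⟨w, ⟨hw, by simp⟩, rfl⟩
    have hTbdd : BddAbove T := ⟨M, by rintro r ⟨t, ⟨ht, _⟩, rfl⟩; exact hM t ht⟩
    have hlt : sSup T - (1/2)^n < sSup T := by
      have : (0:ℝ) < (1/2)^n := by positivity
      linarith
    obtain ⟨r, hrT, hr⟩ := exists_lt_of_lt_csSup ⟨_, hTne⟩ hlt
    obtain ⟨v, hv, rfl⟩ := hrT
    exact ⟨v, hv, fun t ht hrel => by
      have : g t ≤ sSup T := le_csSup hTbdd ⟨t, ⟨ht, hrel⟩, rfl⟩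
      linarith⟩
  choose! next h1 h2 using key
  let u : ℕ → X := fun n => Nat.rec z (fun m ih => next m ih) n
  have hus : ∀ n, u (n+1) = next n (u n) := fun n => rfl
  have humem : ∀ n, u n ∈ C := by
    intro n
    induction n with
    | zero => exact hz
    | succ m ih => rw [hus]; exact (h1 m (u m) ih).1
  have hrel1 : ∀ n, k * ‖u (n+1) - u n‖ ≤ g (u (n+1)) - g (u n) := fun n => by
    rw [hus]; exact (h1 n (u n) (humem n)).2
  have chain : ∀ n m, n ≤ m → k * ‖u m - u n‖ ≤ g (u m) - g (u n) := by
    intro n m hnm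
    induction m, hnm using Nat.le_induction with
    | base => simp
    | succ m hm ih =>
      have tri : ‖u (m+1) - u n‖ ≤ ‖u (m+1) - u m‖ + ‖u m - u n‖ :=
        norm_sub_le_norm_sub_add_norm_sub _ _ _
      have h3 := hrel1 m
      nlinarith [norm_nonneg (u (m+1) - u m), norm_nonneg (u m - u n)]
  have hmono : Monotone fun n => g (u n) := monotone_nat_of_le_succ fun n => by
    have := hrel1 n; nlinarith [norm_nonneg (u (n+1) - u n)]
  have hbdd : BddAbove (Set.range fun n => g (u n)) :=
    ⟨M, by rintro r ⟨n, rfl⟩; exact hM _ (humem n)⟩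
  have hconv : Tendsto (fun n => g (u n)) atTop (𝓝 (⨆ n, g (u n))) :=
    tendsto_atTop_ciSup hmono hbdd
  have hCauchyA : CauchySeq fun n => g (u n) := hconv.cauchySeq
  have hCauchy : CauchySeq u := by
    rw [Metric.cauchySeq_iff] at hCauchyA ⊢
    intro ε hε
    obtain ⟨N, hN⟩ := hCauchyA (k * ε) (by positivity)
    refine ⟨N, fun m hm n hn => ?_⟩
    have key2 : ∀ a b, N ≤ a → N ≤ b → b ≤ a → dist (u a) (u b) < ε := by
      intro a b ha hb hba
      have h3 := chain b a hba
      have h4 := hN a ha b hb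
      rw [Real.dist_eq] at h4
      rw [dist_eq_norm]
      have h5 : k * ‖u a - u b‖ < k * ε := by
        calc k * ‖u a - u b‖ ≤ g (u a) - g (u b) := h3
          _ ≤ |g (u a) - g (u b)| := le_abs_self _
          _ < k * ε := h4
      exact lt_of_mul_lt_mul_left h5 hk.le
    rcases le_total n m with hle | hle
    · exact key2 m n hm hn hle
    · rw [dist_comm]; exact key2 n m hn hm hle
  obtain ⟨y, hy⟩ := cauchySeq_tendsto_of_complete hCauchy
  have hyC : y ∈ C := hC.mem_of_tendsto hy (Eventually.of_forall humem)
  have hchainlim : ∀ n, k * ‖y - u n‖ ≤ g y - g (u n) := by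
    intro n
    have h3 : Tendsto (fun m => k * ‖u m - u n‖) atTop (𝓝 (k * ‖y - u n‖)) :=
      ((hy.sub tendsto_const_nhds).norm).const_mul k
    have h4 : Tendsto (fun m => g (u m) - g (u n)) atTop (𝓝 (g y - g (u n))) :=
      (((g.continuous.tendsto y).comp hy).sub tendsto_const_nhds)
    exact le_of_tendsto_of_tendsto h3 h4 (eventually_atTop.2 ⟨n, fun m hm => chain n m hm⟩)
  refine ⟨y, hyC, hchainlim 0, ?_⟩
  intro v hv hrelv
  have hrelvn : ∀ n, k * ‖v - u n‖ ≤ g v - g (u n) := fun n => by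
    have h3 := hchainlim n
    have tri : ‖v - u n‖ ≤ ‖v - y‖ + ‖y - u n‖ := norm_sub_le_norm_sub_add_norm_sub _ _ _
    nlinarith [norm_nonneg (v - y), norm_nonneg (y - u n)]
  have hgvy : g v ≤ g y := by
    have hb : ∀ n : ℕ, g v ≤ g y + (1/2)^n := fun n => by
      have h3 := h2 n (u n) (humem n) v hv (hrelvn n)
      have h4 : g (u (n+1)) ≤ g y := by
        have := hchainlim (n+1); nlinarith [norm_nonneg (y - u (n+1))]
      linarith
    have hlim : Tendsto (fun n : ℕ => g y + (1/2)^n) atTop (𝓝 (g y + 0)) :=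
      tendsto_const_nhds.add
        (tendsto_pow_atTop_nhds_zero_of_lt_one (by norm_num) (by norm_num))
    have := ge_of_tendsto hlim (Eventually.of_forall hb)
    linarith
  have h5 : k * ‖v - y‖ ≤ 0 := le_trans hrelv (by linarith)
  have h6 : ‖v - y‖ ≤ 0 := nonpos_of_mul_nonpos_right (by linarith [mul_comm k ‖v - y‖]) hk
  rw [← sub_eq_zero]
  exact norm_le_zero_iff.mp h6

set_option maxHeartbeats 1000000 in
lemma cone_norm_close {X : Type*} [NormedAddCommGroup X] [NormedSpace ℝ X]
    (zs gg : X →L[ℝ] ℝ) (hzs : ‖zs‖ = 1) (hgg : ‖gg‖ = 1) (k : ℝ)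
    (hk0 : 0 < k) (hk1 : k < 1) (hcone : ∀ w, k * ‖w‖ ≤ zs w → 0 ≤ gg w) :
    ‖zs - gg‖ ≤ 2 * k := by
  have hggne : gg ≠ 0 := by intro h0; rw [h0] at hgg; simp at hgg
  have habs : ∀ w, gg w = 0 → |zs w| ≤ k * ‖w‖ := by
    have hker : ∀ w, gg w = 0 → zs w ≤ k * ‖w‖ := by
      intro w hw
      by_contra hlt
      push_neg at hlt
      have hgzero : ∀ u, 0 ≤ gg u := by
        intro u
        rcases eq_or_ne u 0 with rfl | hu
        · simp
        have hunorm : 0 < ‖u‖ := norm_pos_iff.mpr hu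
        set ε := (zs w - k * ‖w‖) / ((1 + k) * ‖u‖) with hε
        have hεpos : 0 < ε := div_pos (by linarith) (by positivity)
        have hεeq : ε * ((1 + k) * ‖u‖) = zs w - k * ‖w‖ := by
          rw [hε]; exact div_mul_cancel₀ _ (mul_pos (by linarith) hunorm).ne'
        have hmem : k * ‖w + ε • u‖ ≤ zs (w + ε • u) := by
          have h1 : ‖w + ε • u‖ ≤ ‖w‖ + ε * ‖u‖ := by
            simpa [norm_smul, abs_of_pos hεpos] using norm_add_le w (ε • u)
          have h2 : zs (w + ε • u) = zs w + ε * zs u := by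
            simp [map_add, map_smul, smul_eq_mul]
          have h3 : |zs u| ≤ ‖u‖ := by
            have := zs.le_opNorm u
            rwa [hzs, one_mul, Real.norm_eq_abs] at this
          have h4 : -‖u‖ ≤ zs u := by
            have := abs_le.mp h3; linarith [this.1]
          nlinarith [norm_nonneg u]
        have h5 := hcone _ hmem
        have h6 : gg (w + ε • u) = ε * gg u := by
          simp [map_add, map_smul, smul_eq_mul, hw]
        nlinarith
      apply hggne
      ext u
      have h1 := hgzero u
      have h2 := hgzero (-u)
      simp only [map_neg] at h2
      simp only [ContinuousLinearMap.zero_apply]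
      linarith
    intro w hw
    rw [abs_le]
    refine ⟨?_, hker w hw⟩
    have := hker (-w) (by simp [hw])
    simp only [map_neg, norm_neg] at this
    linarith
  set p : Submodule ℝ X := LinearMap.ker (gg : X →ₗ[ℝ] ℝ) with hp
  set f0 : p →L[ℝ] ℝ := zs.comp (Submodule.subtypeL p) with hf0def
  have hf0 : ‖f0‖ ≤ k := by
    refine f0.opNorm_le_bound hk0.le fun w => ?_
    have hw : gg w.1 = 0 := w.2
    have := habs w.1 hw
    simpa [hf0def, Real.norm_eq_abs] using this
  obtain ⟨hh, hhext, hhnorm⟩ := exists_extension_norm_eq p f0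
  have hhk : ‖hh‖ ≤ k := hhnorm ▸ hf0
  obtain ⟨x0, hx0⟩ : ∃ x0, gg x0 ≠ 0 := by
    by_contra hc
    push_neg at hc
    exact hggne (by ext u; simpa using hc u)
  set lam := (zs x0 - hh x0) / gg x0 with hlam
  have hdecomp : ∀ v, zs v = lam * gg v + hh v := by
    intro v
    set c := gg v / gg x0 with hc
    have hker' : (v - c • x0) ∈ p := by
      simp only [hp, LinearMap.mem_ker, ContinuousLinearMap.coe_coe]
      rw [map_sub, map_smul, smul_eq_mul, hc]
      field_simp
      ring
    have hext := hhext ⟨_, hker'⟩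
    have hf0val : f0 ⟨_, hker'⟩ = zs (v - c • x0) := rfl
    rw [hf0val] at hext
    have h1 : hh (v - c • x0) = zs (v - c • x0) := by
      simpa using hext
    rw [map_sub, map_smul, map_sub, map_smul, smul_eq_mul, smul_eq_mul] at h1
    have h3 : lam * gg v = c * (zs x0 - hh x0) := by
      rw [hlam, hc]; ring
    linarith [h1, h3]
  obtain ⟨v0, hv0⟩ : ∃ v0, k * ‖v0‖ < zs v0 := by
    by_contra hc
    push_neg at hc
    have hb : ‖zs‖ ≤ k := by
      refine zs.opNorm_le_bound hk0.le fun v => ?_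
      have h1 := hc v
      have h2 := hc (-v)
      simp only [map_neg, norm_neg] at h2
      rw [Real.norm_eq_abs, abs_le]
      constructor <;> linarith
    rw [hzs] at hb; linarith
  have hgv0 : 0 ≤ gg v0 := hcone v0 hv0.le
  have hhv0 : |hh v0| ≤ k * ‖v0‖ := by
    have := hh.le_opNorm v0
    rw [Real.norm_eq_abs] at this
    nlinarith [norm_nonneg v0]
  have hlampos : 0 < lam := by
    have hd := hdecomp v0
    have h1 := abs_le.mp hhv0
    have hneq : 0 < lam * gg v0 := by linarith [h1.2]
    rcases lt_trichotomy lam 0 with hl | hl | hl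
    · have hle : lam * gg v0 ≤ 0 := mul_nonpos_iff.mpr (Or.inr ⟨hl.le, hgv0⟩)
      linarith
    · rw [hl] at hneq; simp at hneq
    · exact hl
  have hdg : zs - hh = lam • gg := by
    ext v
    simp only [ContinuousLinearMap.sub_apply, ContinuousLinearMap.smul_apply, smul_eq_mul]
    have := hdecomp v; linarith
  have hnormd : ‖zs - hh‖ = lam := by
    rw [hdg]
    rw [norm_smul lam gg, hgg, Real.norm_eq_abs, abs_of_pos hlampos, mul_one]
  have hlb : 1 - k ≤ lam := by
    have h1 : ‖zs‖ - ‖hh‖ ≤ ‖zs - hh‖ := norm_sub_norm_le _ _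
    rw [hzs, hnormd] at h1; linarith
  have hub : lam ≤ 1 + k := by
    have h1 : ‖zs - hh‖ ≤ ‖zs‖ + ‖hh‖ := norm_sub_le _ _
    rw [hzs, hnormd] at h1; linarith
  have hfinal : zs - gg = (lam - 1) • gg + hh := by
    ext v
    simp only [ContinuousLinearMap.sub_apply, ContinuousLinearMap.add_apply,
      ContinuousLinearMap.smul_apply, smul_eq_mul]
    linear_combination hdecomp v
  calc ‖zs - gg‖ = ‖(lam - 1) • gg + hh‖ := by rw [hfinal]
    _ ≤ ‖(lam - 1) • gg‖ + ‖hh‖ := norm_add_le _ _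
    _ = |lam - 1| + ‖hh‖ := by rw [norm_smul (lam-1) gg, hgg, Real.norm_eq_abs, mul_one]
    _ ≤ k + k := by
        have : |lam - 1| ≤ k := abs_le.mpr ⟨by linarith, by linarith⟩
        linarith
    _ = 2 * k := by ring

set_option maxHeartbeats 1000000 in
/-- Phelps' lemma specialized to the closed ball of radius `μ`: there is a point `ty` of
norm `μ` and a unit functional `g` attaining `μ` at `ty`, with `ty` close to `x` in the
Bishop–Phelps sense and `g` close to `zs`. -/
lemma phelps_closedBall {X : Type*} [NormedAddCommGroup X] [NormedSpace ℝ X]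
    [CompleteSpace X] (μ : ℝ) (hμpos : 0 < μ) (zs : X →L[ℝ] ℝ) (hzs_norm : ‖zs‖ = 1)
    (k : ℝ) (hk0 : 0 < k) (hk1 : k < 1) (x : X) (hx : ‖x‖ ≤ μ) :
    ∃ (ty : X) (g : X →L[ℝ] ℝ), ‖ty‖ = μ ∧ ‖g‖ = 1 ∧ g ty = μ ∧
      k * ‖ty - x‖ ≤ zs ty - zs x ∧ ‖zs - g‖ ≤ 2 * k := by
  set C := Metric.closedBall (0:X) μ with hCdef
  have hxC : x ∈ C := by
    rw [hCdef, Metric.mem_closedBall, dist_zero_right]; exact hx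
  have hCnorm : ∀ v ∈ C, ‖v‖ ≤ μ := fun v hv => by
    rwa [hCdef, Metric.mem_closedBall, dist_zero_right] at hv
  have hbound : ∀ v ∈ C, zs v ≤ μ := by
    intro v hv
    have h1 : |zs v| ≤ ‖zs‖ * ‖v‖ := by
      have := zs.le_opNorm v; rwa [Real.norm_eq_abs] at this
    rw [hzs_norm, one_mul] at h1
    have := abs_le.mp h1
    linarith [hCnorm v hv, this.2]
  obtain ⟨ty, htyC, htydist, htymax⟩ :=
    exists_maximal_point C Metric.isClosed_closedBall zs μ hbound k hk0 x hxC
  -- the cone-shifted set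
  set S := {v : X | k * ‖v - ty‖ ≤ zs v - zs ty} with hSdef
  have htyS : ty ∈ S := by simp [hSdef]
  have hSconv : Convex ℝ S := by
    intro a ha b hb p q hp hq hpq
    simp only [hSdef, Set.mem_setOf_eq] at ha hb ⊢
    have h1 : p • a + q • b - ty = p • (a - ty) + q • (b - ty) := by
      have hty : ty = (p + q) • ty := by rw [hpq, one_smul]
      calc p • a + q • b - ty = p • a + q • b - (p + q) • ty := by rw [← hty]
        _ = p • (a - ty) + q • (b - ty) := by module
    have h2 : ‖p • a + q • b - ty‖ ≤ p * ‖a - ty‖ + q * ‖b - ty‖ := by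
      rw [h1]
      calc ‖p • (a - ty) + q • (b - ty)‖ ≤ ‖p • (a - ty)‖ + ‖q • (b - ty)‖ := norm_add_le _ _
        _ = p * ‖a - ty‖ + q * ‖b - ty‖ := by
            rw [norm_smul p (a - ty), norm_smul q (b - ty), Real.norm_eq_abs,
              Real.norm_eq_abs, abs_of_nonneg hp, abs_of_nonneg hq]
    have h3 : zs (p • a + q • b) = p * zs a + q * zs b := by
      rw [map_add, map_smul, map_smul]; rfl
    have h4 : p * (zs a - zs ty) + q * (zs b - zs ty) = zs (p • a + q • b) - zs ty := by
      rw [h3]; linear_combination (-(zs ty)) * hpq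
    have h5 := mul_le_mul_of_nonneg_left h2 hk0.le
    have h6 := mul_le_mul_of_nonneg_left ha hp
    have h7 := mul_le_mul_of_nonneg_left hb hq
    nlinarith [h4, h5, h6, h7]
  -- a point deep inside the cone
  obtain ⟨v, hvnorm, hvval⟩ : ∃ v, ‖v‖ ≤ 1 ∧ (1 + k)/2 < zs v := by
    by_contra hc
    push_neg at hc
    have hb : ‖zs‖ ≤ (1 + k)/2 := by
      refine zs.opNorm_le_bound (by linarith) fun w => ?_
      rcases eq_or_ne w 0 with rfl | hw
      · simp
      · have hwn : 0 < ‖w‖ := norm_pos_iff.mpr hw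
        have hnormed : ‖‖w‖⁻¹ • w‖ = 1 := by
          rw [norm_smul ‖w‖⁻¹ w, Real.norm_eq_abs, abs_of_pos (inv_pos.mpr hwn)]
          field_simp
        have h1 := hc (‖w‖⁻¹ • w) hnormed.le
        have h2 := hc (-(‖w‖⁻¹ • w)) (by rw [norm_neg, hnormed])
        rw [map_neg] at h2
        rw [map_smul, smul_eq_mul] at h1 h2
        have e1 : ‖w‖ * (‖w‖⁻¹ * zs w) = zs w := by field_simp
        have e2 := mul_le_mul_of_nonneg_left h1 (norm_nonneg w)
        have e3 := mul_le_mul_of_nonneg_left h2 (norm_nonneg w)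
        rw [Real.norm_eq_abs, abs_le]
        constructor
        · nlinarith [e1, e3]
        · nlinarith [e1, e2]
    rw [hzs_norm] at hb; linarith
  set r := (1 - k) / (2 * (1 + k)) with hr
  have hrpos : 0 < r := div_pos (by linarith) (by linarith)
  have hrkey : k * (1 + r) = (1 + k)/2 - r := by
    rw [hr]; field_simp; ring
  have hball : Metric.ball (ty + v) r ⊆ S := by
    intro w hw
    rw [Metric.mem_ball, dist_eq_norm] at hw
    set w' := w - ty with hw'
    have hwv : ‖w' - v‖ < r := by
      rw [hw', sub_sub]; exact hw
    have h1 : zs w' = zs v + zs (w' - v) := by rw [← map_add]; congr 1; abel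
    have h2 : |zs (w' - v)| ≤ ‖w' - v‖ := by
      have := zs.le_opNorm (w' - v)
      rwa [hzs_norm, one_mul, Real.norm_eq_abs] at this
    have h3 : zs v - r < zs w' := by
      have := abs_le.mp h2; nlinarith
    have h4 : ‖w'‖ ≤ 1 + r := by
      have htri := norm_add_le v (w' - v)
      rw [show v + (w' - v) = w' from by abel] at htri
      linarith
    have h5 : k * ‖w'‖ ≤ k * (1 + r) := mul_le_mul_of_nonneg_left h4 hk0.le
    show k * ‖w - ty‖ ≤ zs w - zs ty
    have h6 : zs w - zs ty = zs w' := by rw [hw', map_sub]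
    rw [← hw', h6]
    nlinarith
  have hint : ty + v ∈ interior S :=
    mem_interior.mpr ⟨Metric.ball (ty + v) r, hball, Metric.isOpen_ball,
      Metric.mem_ball_self hrpos⟩
  have hvpos : 0 < zs v := lt_trans (by linarith) hvval
  have hdisj : Disjoint (interior S) C := by
    rw [Set.disjoint_left]
    intro a ha haC
    have haS : a ∈ S := interior_subset ha
    have haty : a = ty := htymax a haC haS
    rw [haty] at ha
    obtain ⟨ε, hε, hballS⟩ := Metric.mem_nhds_iff.mp (mem_interior_iff_mem_nhds.mp ha)
    have hvne : v ≠ 0 := by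
      intro h0; rw [h0] at hvpos; simp at hvpos
    set w := ty - (ε/2) • v with hwdef
    have hwball : w ∈ Metric.ball ty ε := by
      rw [Metric.mem_ball, dist_eq_norm, hwdef]
      rw [show ty - (ε/2) • v - ty = -((ε/2) • v) from by abel]
      rw [norm_neg, norm_smul (ε/2) v, Real.norm_eq_abs, abs_of_pos (by linarith : (0:ℝ) < ε/2)]
      nlinarith [hvnorm]
    have hwS : w ∈ S := hballS hwball
    rw [hSdef, Set.mem_setOf_eq] at hwS
    have h1 : zs w - zs ty = -((ε/2) * zs v) := by
      rw [hwdef, map_sub, map_smul, smul_eq_mul]; ring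
    rw [h1] at hwS
    nlinarith [norm_nonneg (w - ty), mul_nonneg hk0.le (norm_nonneg (w - ty))]
  obtain ⟨fsep, u, hfs1, hfs2⟩ :=
    geometric_hahn_banach_open (hSconv.interior) isOpen_interior
      (convex_closedBall (0:X) μ) hdisj
  have hSle : ∀ a ∈ S, fsep a ≤ u := by
    intro a haS
    by_contra hu
    push_neg at hu
    have hfa0 : fsep (ty + v) < u := hfs1 _ hint
    set D := fsep a - fsep (ty + v) with hD
    have hDpos : 0 < D := by rw [hD]; linarith
    set t := (fsep a - u) / (2 * D) with ht
    have ht0 : 0 < t := div_pos (by linarith) (by linarith)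
    have ht1 : t < 1 := by
      rw [ht, div_lt_one (by linarith)]
      rw [hD]; linarith
    have hcombo : t • (ty + v) + (1 - t) • a ∈ interior S :=
      hSconv.combo_interior_closure_mem_interior hint (subset_closure haS) ht0
        (by linarith) (by ring)
    have hlt := hfs1 _ hcombo
    rw [map_add, map_smul, map_smul, smul_eq_mul, smul_eq_mul] at hlt
    have htD : t * D = (fsep a - u) / 2 := by
      rw [ht]; field_simp [hDpos.ne']
    nlinarith
  have hu_ty : fsep ty = u := le_antisymm (hSle ty htyS) (hfs2 ty htyC)
  set ys : X →L[ℝ] ℝ := -fsep with hysdef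
  have hysne : ys ≠ 0 := by
    intro h0
    have hfsep0 : fsep = 0 := by
      have : fsep = -ys := by rw [hysdef]; simp
      rw [this, h0]; simp
    have h1 := hfs1 _ hint
    have h2 := hfs2 x hxC
    rw [hfsep0] at h1 h2
    simp at h1 h2
    linarith
  have hmaxC : ∀ c ∈ C, ys c ≤ ys ty := by
    intro c hc
    have := hfs2 c hc
    simp only [hysdef, ContinuousLinearMap.neg_apply]
    linarith [hu_ty]
  have hconeYs : ∀ w, k * ‖w‖ ≤ zs w → 0 ≤ ys w := by
    intro w hw
    have hmem : ty + w ∈ S := by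
      rw [hSdef, Set.mem_setOf_eq]
      have h1 : ty + w - ty = w := by abel
      have h2 : zs (ty + w) - zs ty = zs w := by rw [map_add]; ring
      rw [h1, h2]; exact hw
    have := hSle _ hmem
    rw [map_add] at this
    simp only [hysdef, ContinuousLinearMap.neg_apply]
    linarith [hu_ty]
  have hysnorm_pos : 0 < ‖ys‖ := norm_pos_iff.mpr hysne
  have hys_ty_nonneg : 0 ≤ ys ty := by
    have h0C : (0:X) ∈ C := by
      rw [hCdef, Metric.mem_closedBall, dist_self]; exact hμpos.le
    have := hmaxC 0 h0C
    simpa using this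
  have hty_val : ys ty = μ * ‖ys‖ := by
    have hub2 : ‖ys‖ ≤ ys ty / μ := by
      refine ys.opNorm_le_bound (div_nonneg hys_ty_nonneg hμpos.le) fun w => ?_
      rcases eq_or_ne w 0 with rfl | hw
      · simp
      · have hwn : 0 < ‖w‖ := norm_pos_iff.mpr hw
        have hc1 : (μ / ‖w‖) • w ∈ C := by
          rw [hCdef, Metric.mem_closedBall, dist_zero_right, norm_smul (μ / ‖w‖) w,
            Real.norm_eq_abs, abs_of_pos (by positivity)]
          field_simp
          exact le_rfl
        have hc2 : -((μ / ‖w‖) • w) ∈ C := by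
          rw [hCdef, Metric.mem_closedBall, dist_zero_right, norm_neg, norm_smul (μ / ‖w‖) w,
            Real.norm_eq_abs, abs_of_pos (by positivity)]
          field_simp
          exact le_rfl
        have h1 := hmaxC _ hc1
        have h2 := hmaxC _ hc2
        rw [map_smul, smul_eq_mul] at h1
        rw [map_neg, map_smul, smul_eq_mul] at h2
        have hμw : 0 < μ / ‖w‖ := by positivity
        have habs1 : |(μ / ‖w‖) * ys w| ≤ ys ty := abs_le.mpr ⟨by linarith, h1⟩
        have habs2 : (μ / ‖w‖) * |ys w| ≤ ys ty := by
          rwa [abs_mul, abs_of_pos hμw] at habs1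
        rw [Real.norm_eq_abs, div_mul_eq_mul_div, le_div_iff₀ hμpos]
        have h5 := mul_le_mul_of_nonneg_left habs2 (norm_nonneg w)
        have hcalc : ‖w‖ * ((μ / ‖w‖) * |ys w|) = μ * |ys w| := by field_simp
        nlinarith
    have hlb2 : ys ty ≤ ‖ys‖ * μ := by
      have h1 : ys ty ≤ |ys ty| := le_abs_self _
      have h2 : |ys ty| ≤ ‖ys‖ * ‖ty‖ := by
        have := ys.le_opNorm ty; rwa [Real.norm_eq_abs] at this
      have h3 : ‖ty‖ ≤ μ := hCnorm ty htyC
      nlinarith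
    have h4 : ‖ys‖ * μ ≤ ys ty := by
      have := (le_div_iff₀ hμpos).mp hub2; linarith
    linarith
  -- normalize ys
  set g : X →L[ℝ] ℝ := ‖ys‖⁻¹ • ys with hgdef
  have hgnorm : ‖g‖ = 1 := by
    rw [hgdef, norm_smul ‖ys‖⁻¹ ys, Real.norm_eq_abs, abs_of_pos (inv_pos.mpr hysnorm_pos)]
    field_simp
  have hgty : g ty = μ := by
    have : g ty = ‖ys‖⁻¹ * ys ty := rfl
    rw [this, hty_val]
    field_simp
  have hty_norm : ‖ty‖ = μ := by
    have h1 : ys ty ≤ |ys ty| := le_abs_self _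
    have h2 : |ys ty| ≤ ‖ys‖ * ‖ty‖ := by
      have := ys.le_opNorm ty; rwa [Real.norm_eq_abs] at this
    have h3 : ‖ty‖ ≤ μ := hCnorm ty htyC
    have h4 : μ * ‖ys‖ ≤ ‖ys‖ * ‖ty‖ := by rw [← hty_val]; linarith
    have h5 : μ ≤ ‖ty‖ := by nlinarith
    linarith
  have hconeg : ∀ w, k * ‖w‖ ≤ zs w → 0 ≤ g w := by
    intro w hw
    have h1 := hconeYs w hw
    have : g w = ‖ys‖⁻¹ * ys w := rfl
    rw [this]
    exact mul_nonneg (inv_nonneg.mpr (norm_nonneg ys)) h1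
  have hclose := cone_norm_close zs g hzs_norm hgnorm k hk0 hk1 hconeg
  exact ⟨ty, g, hty_norm, hgnorm, hgty, htydist, hclose⟩



/-- The function Ψ(μ,θ,δ) from the paper. -/
noncomputable def Psi (μ θ δ : ℝ) : ℝ :=
  (2 - μ - θ + Real.sqrt ((μ - θ)^2 + 8 * (μ * θ - 1 + δ))) / 2

/-- The set Π(X) of pairs of unit vectors and unit functionals attaining their norm. -/
def PiSet (X : Type*) [NormedAddCommGroup X] [NormedSpace ℝ X] : Set (X × (X →L[ℝ] ℝ)) :=
  {p | ‖p.1‖ = 1 ∧ ‖p.2‖ = 1 ∧ p.2 p.1 = 1}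

/-- The d_∞ distance from a pair (x, x*) to Π(X). -/
noncomputable def dInfPi {X : Type*} [NormedAddCommGroup X] [NormedSpace ℝ X]
    (x : X) (f : X →L[ℝ] ℝ) : ℝ :=
  sInf {r : ℝ | ∃ p ∈ PiSet X, r = max ‖x - p.1‖ ‖f - p.2‖}

set_option maxHeartbeats 1000000 in
theorem dInfPi_le_Psi (X : Type*) [NormedAddCommGroup X] [NormedSpace ℝ X]
    [CompleteSpace X] (δ μ θ : ℝ) (hδ : δ ∈ Set.Ioo (0:ℝ) 2)
    (hμ : μ ∈ Set.Icc (0:ℝ) 1) (hθ : θ ∈ Set.Icc (0:ℝ) 1) (h : μ * θ > 1 - δ)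
    (hsmall : δ < min (1 + μ^2) (1 + θ^2))
    (x : X) (f : X →L[ℝ] ℝ) (hx : ‖x‖ = μ) (hf : ‖f‖ = θ) (hfx : f x ≥ 1 - δ) :
    dInfPi x f ≤ Psi μ θ δ := by
  obtain ⟨hδ0, hδ2⟩ := hδ
  obtain ⟨hμ0, hμ1⟩ := hμ
  obtain ⟨hθ0, hθ1⟩ := hθ
  rw [lt_min_iff] at hsmall
  obtain ⟨hsμ, hsθ⟩ := hsmall
  have hμpos : 0 < μ := by
    rcases hμ0.lt_or_eq with hlt | heq
    · exact hlt
    · exfalso; rw [← heq] at h hsμ; simp at h hsμ; nlinarith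
  have hθpos : 0 < θ := by
    rcases hθ0.lt_or_eq with hlt | heq
    · exact hlt
    · exfalso; rw [← heq] at h hsθ; simp at h hsθ; nlinarith
  set s := Real.sqrt ((μ - θ)^2 + 8 * (μ * θ - 1 + δ)) with hs
  have hPsi : Psi μ θ δ = (2 - μ - θ + s) / 2 := rfl
  have hinner : 0 < (μ - θ)^2 + 8 * (μ * θ - 1 + δ) := by nlinarith
  have hs_nonneg : 0 ≤ s := Real.sqrt_nonneg _
  have hs_sq : s^2 = (μ - θ)^2 + 8 * (μ * θ - 1 + δ) := Real.sq_sqrt hinner.le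
  have hs_gt1 : θ - μ < s := by nlinarith
  have hs_gt2 : μ - θ < s := by nlinarith
  have hs_lt : s < μ + 3 * θ := by nlinarith
  set k := (θ - μ + s) / (4 * θ) with hk
  have hk0 : 0 < k := div_pos (by linarith) (by linarith)
  have hk1 : k < 1 := by
    rw [hk, div_lt_one (by linarith)]; linarith
  set zs : X →L[ℝ] ℝ := θ⁻¹ • f with hzsdef
  have hzsapp : ∀ v, zs v = θ⁻¹ * f v := fun v => rfl
  have hzs_norm : ‖zs‖ = 1 := by
    rw [hzsdef, norm_smul θ⁻¹ f, hf, Real.norm_eq_abs, abs_of_pos (by positivity)]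
    field_simp
  obtain ⟨ty, g, hty_norm, hgnorm, hgty, htydist, hclose⟩ :=
    phelps_closedBall μ hμpos zs hzs_norm k hk0 hk1 x (le_of_eq hx)
  set y : X := μ⁻¹ • ty with hydef
  have hy_norm : ‖y‖ = 1 := by
    rw [hydef, norm_smul μ⁻¹ ty, hty_norm, Real.norm_eq_abs, abs_of_pos (inv_pos.mpr hμpos)]
    field_simp
  have hgy : g y = 1 := by
    have : g y = μ⁻¹ * g ty := by rw [hydef, map_smul]; rfl
    rw [this, hgty]
    field_simp
  -- first estimate
  have hdistx : ‖x - y‖ ≤ Psi μ θ δ := by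
    have h2 : zs ty ≤ μ := by
      have h2a : |zs ty| ≤ ‖zs‖ * ‖ty‖ := by
        have := zs.le_opNorm ty; rwa [Real.norm_eq_abs] at this
      rw [hzs_norm, one_mul, hty_norm] at h2a
      linarith [(abs_le.mp h2a).2]
    have h3 : (1 - δ)/θ ≤ zs x := by
      rw [hzsapp]
      rw [div_eq_inv_mul]
      exact mul_le_mul_of_nonneg_left hfx (by positivity)
    have hkey : μ - (1 - δ)/θ = k * (Psi μ θ δ - 1 + μ) := by
      rw [hPsi, hk]
      field_simp
      nlinarith [hs_sq]
    have h4 : k * ‖ty - x‖ ≤ k * (Psi μ θ δ - 1 + μ) := by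
      rw [← hkey]; linarith
    have h5 : ‖ty - x‖ ≤ Psi μ θ δ - 1 + μ := by
      exact le_of_mul_le_mul_left h4 hk0
    have h6 : ‖ty - y‖ = 1 - μ := by
      have e1 : ty - y = (1 - μ⁻¹) • ty := by
        rw [hydef]; module
      rw [e1, norm_smul (1 - μ⁻¹) ty, hty_norm, Real.norm_eq_abs]
      have : |1 - μ⁻¹| = μ⁻¹ - 1 := by
        rw [abs_of_nonpos]
        · ring
        · have : 1 ≤ μ⁻¹ := by
            rw [le_inv_comm₀] <;> simp [hμpos, hμ1]
          linarith
      rw [this]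
      field_simp
    have h7 : ‖x - y‖ ≤ ‖x - ty‖ + ‖ty - y‖ := norm_sub_le_norm_sub_add_norm_sub _ _ _
    rw [norm_sub_rev x ty] at h7
    linarith
  -- second estimate
  have hdistf : ‖f - g‖ ≤ Psi μ θ δ := by
    have hfeq : f = θ • zs := by
      rw [hzsdef, smul_smul]
      rw [mul_inv_cancel₀ (ne_of_gt hθpos), one_smul]
    have hsplit : f - g = θ • (zs - g) + (θ - 1) • g := by
      rw [hfeq]; module
    have h1 : ‖f - g‖ ≤ ‖θ • (zs - g)‖ + ‖(θ - 1) • g‖ := by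
      rw [hsplit]; exact norm_add_le _ _
    have h2 : ‖θ • (zs - g)‖ = θ * ‖zs - g‖ := by
      rw [norm_smul θ (zs - g), Real.norm_eq_abs, abs_of_pos hθpos]
    have h3 : ‖(θ - 1) • g‖ = 1 - θ := by
      rw [norm_smul (θ - 1) g, hgnorm, Real.norm_eq_abs, abs_of_nonpos (by linarith)]
      ring
    have h4 : θ * ‖zs - g‖ ≤ θ * (2 * k) := mul_le_mul_of_nonneg_left hclose hθpos.le
    have h5 : θ * (2 * k) + (1 - θ) = Psi μ θ δ := by
      rw [hPsi, hk]
      field_simp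
      ring
    linarith
  -- conclude
  have hmem : max ‖x - y‖ ‖f - g‖ ∈
      {r : ℝ | ∃ p ∈ PiSet X, r = max ‖x - p.1‖ ‖f - p.2‖} :=
    ⟨(y, g), ⟨hy_norm, hgnorm, hgy⟩, rfl⟩
  have hbdd : BddBelow {r : ℝ | ∃ p ∈ PiSet X, r = max ‖x - p.1‖ ‖f - p.2‖} := by
    refine ⟨0, ?_⟩
    rintro r ⟨p, _, rfl⟩
    exact le_max_of_le_left (norm_nonneg _)
  calc dInfPi x f ≤ max ‖x - y‖ ‖f - g‖ := csInf_le hbdd hmem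
    _ ≤ Psi μ θ δ := max_le hdistx hdistf
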